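/- Let G=(V,E) be a directed, strongly connected graph on N nodes and let c ∈ ℝ^N be any vector with strictly positive entries. Then there exists an assignment of strictly positive weights w_{ij} to the edges (i,j) ∈ E and a real number λ > 0 such that the weighted adjacency matrix W ∈ ℝ^{N×N} (defined by W_{ij} = w_{ij} if (i,j) ∈ E and W_{ij} = 0 otherwise) satisfies W^T c = λ c; that is, c is the eigenvector centrality of the weighted graph. -/

import Mathlib

open Matrix

/-- Given a strongly connected directed graph `E` on `N` nodes (strong
connectivity: a directed path between any ordered pair of nodes, i.e. `Relation.TransGen E`)
and any strictly positive vector `c`, there is an assignment of strictly positive weights to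
the edges (zero off the edges) and a `λ > 0` such that `Wᵀ c = λ c`, i.e. `c` is the
eigenvector centrality of the weighted graph. -/
theorem weight_tuning_control {N : ℕ} (E : Fin N → Fin N → Prop)
    (hconn : ∀ i j : Fin N, Relation.TransGen E i j)
    (c : Fin N → ℝ) (hc : ∀ i, 0 < c i) :
    ∃ (W : Matrix (Fin N) (Fin N) ℝ) (lam : ℝ),
      0 < lam ∧
      (∀ i j, E i j → 0 < W i j) ∧
      (∀ i j, ¬ E i j → W i j = 0) ∧
      Wᵀ.mulVec c = lam • c := by
  classical
  -- every node has an incoming edge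
  have hin : ∀ j : Fin N, ∃ i, E i j := by
    intro j
    cases hconn j j with
    | single h => exact ⟨j, h⟩
    | tail _ h => exact ⟨_, h⟩
  set d : Fin N → ℕ := fun j => (Finset.univ.filter (fun i => E i j)).card with hd
  have hdpos : ∀ j, 0 < d j := by
    intro j
    obtain ⟨i, hi⟩ := hin j
    exact Finset.card_pos.2 ⟨i, Finset.mem_filter.2 ⟨Finset.mem_univ i, hi⟩⟩
  refine ⟨fun i j => if E i j then c j / (d j * c i) else 0, 1, one_pos, ?_, ?_, ?_⟩
  · intro i j h
    simp only [if_pos h]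
    exact div_pos (hc j) (mul_pos (by exact_mod_cast hdpos j) (hc i))
  · intro i j h
    simp only [if_neg h]
  · funext j
    have hdne : (d j : ℝ) ≠ 0 := by exact_mod_cast (hdpos j).ne'
    simp only [mulVec, dotProduct, transpose_apply, Pi.smul_apply, smul_eq_mul, one_mul]
    rw [← Finset.sum_filter_add_sum_filter_not Finset.univ (fun i => E i j)]
    have h2 : ∑ i ∈ Finset.univ.filter (fun i => ¬ E i j),
        (if E i j then c j / (d j * c i) else 0) * c i = 0 := by
      apply Finset.sum_eq_zero
      intro i hi
      rw [if_neg (Finset.mem_filter.1 hi).2, zero_mul]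
    simp only [Matrix.transpose, Matrix.of_apply]
    rw [h2, add_zero]
    have h1 : ∀ i ∈ Finset.univ.filter (fun i => E i j),
        (if E i j then c j / (d j * c i) else 0) * c i = c j / d j := by
      intro i hi
      rw [if_pos (Finset.mem_filter.1 hi).2]
      have := (hc i).ne'
      field_simp
    rw [Finset.sum_congr rfl h1, Finset.sum_const]
    show (d j) • (c j / (d j : ℝ)) = c j
    rw [nsmul_eq_mul, mul_comm, div_mul_cancel₀ _ hdne]
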